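/- Let p be an n×n Hermitian complex matrix with ‖p² − p‖ < 1/4 (operator norm). Let μ₁,…,μₙ be the eigenvalues of p counted with multiplicity. Then the matrix 2p − 1 is invertible, no μ_i equals 1/2, and the signature of 2p − 1 (the number of its positive eigenvalues minus the number of its negative eigenvalues, counted with multiplicity) equals 2·#{i : μ_i > 1/2} − n; equivalently it equals #{i : μ_i > 1/2} − #{i : μ_i < 1/2}. -/

import Mathlib

open scoped Matrix.Norms.L2Operator

open Polynomial Matrix in
private lemma sqp_charpoly_diagonal' {m : Type*} [Fintype m] [DecidableEq m] (d : m → ℂ) :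
    (Matrix.diagonal d).charpoly = ∏ i, (X - C (d i)) := by
  have h : charmatrix (Matrix.diagonal d) = Matrix.diagonal (fun i => X - C (d i)) := by
    ext i j
    by_cases h : i = j
    · subst h; simp [charmatrix_apply_eq]
    · simp [charmatrix_apply_ne _ _ _ h, Matrix.diagonal_apply_ne _ h]
  rw [Matrix.charpoly, h, Matrix.det_diagonal]

open Polynomial Matrix in
private lemma sqp_charpoly_conj_unitary {m : Type*} [Fintype m] [DecidableEq m]
    (U : Matrix.unitaryGroup m ℂ) (D : Matrix m m ℂ) :
    ((U : Matrix m m ℂ) * D * star (U : Matrix m m ℂ)).charpoly = D.charpoly := by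
  have hU1 : (U : Matrix m m ℂ) * star (U : Matrix m m ℂ) = 1 :=
    Matrix.mem_unitaryGroup_iff.mp U.2
  set Um := (U : Matrix m m ℂ).map (C : ℂ →+* ℂ[X]) with hUm
  set sUm := (star (U : Matrix m m ℂ)).map (C : ℂ →+* ℂ[X]) with hsUm
  have hmul : Um * sUm = 1 := by
    rw [hUm, hsUm, ← Matrix.map_mul, hU1, Matrix.map_one _ (map_zero C) (map_one C)]
  have hcomm : ∀ (A : Matrix m m ℂ[X]), A * Matrix.scalar m X = Matrix.scalar m X * A := by
    intro A
    ext i j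
    simp [Matrix.scalar_apply, Matrix.mul_diagonal, Matrix.diagonal_mul, mul_comm]
  have hkey : charmatrix ((U : Matrix m m ℂ) * D * star (U : Matrix m m ℂ))
      = Um * charmatrix D * sUm := by
    unfold charmatrix
    simp only [RingHom.mapMatrix_apply, Matrix.sub_mul, Matrix.mul_sub, Matrix.map_mul]
    rw [← hUm, ← hsUm, mul_assoc Um (Matrix.scalar m X) sUm, ← hcomm sUm,
      ← mul_assoc Um sUm, hmul, one_mul, mul_assoc]
  rw [Matrix.charpoly, hkey, Matrix.det_mul, Matrix.det_mul, Matrix.charpoly]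
  rw [mul_comm (Um.det) _, mul_assoc, ← Matrix.det_mul, hmul, Matrix.det_one, mul_one]

open Polynomial Matrix in
private lemma sqp_hermitian_charpoly_eq {m : Type*} [Fintype m] [DecidableEq m]
    {A : Matrix m m ℂ} (hA : A.IsHermitian) :
    A.charpoly = ∏ i, (X - C ((hA.eigenvalues i : ℝ) : ℂ)) := by
  conv_lhs => rw [hA.spectral_theorem, Unitary.conjStarAlgAut_apply]
  rw [sqp_charpoly_conj_unitary, sqp_charpoly_diagonal']
  rfl

open Matrix in
theorem signature_quasiProjection {n : ℕ} (p : Matrix (Fin n) (Fin n) ℂ)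
    (hp : p.IsHermitian) (hnorm : ‖p * p - p‖ < 1 / 4) :
    ∃ hq : ((2 : Matrix (Fin n) (Fin n) ℂ) * p - 1).IsHermitian,
      IsUnit ((2 : Matrix (Fin n) (Fin n) ℂ) * p - 1) ∧
      (∀ i, hp.eigenvalues i ≠ 1 / 2) ∧
      ((Finset.univ.filter fun i => 0 < hq.eigenvalues i).card : ℤ) -
          ((Finset.univ.filter fun i => hq.eigenvalues i < 0).card : ℤ) =
        2 * ((Finset.univ.filter fun i => 1 / 2 < hp.eigenvalues i).card : ℤ) - n ∧
      ((Finset.univ.filter fun i => 0 < hq.eigenvalues i).card : ℤ) -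
          ((Finset.univ.filter fun i => hq.eigenvalues i < 0).card : ℤ) =
        ((Finset.univ.filter fun i => 1 / 2 < hp.eigenvalues i).card : ℤ) -
          ((Finset.univ.filter fun i => hp.eigenvalues i < 1 / 2).card : ℤ) := by
  classical
  set μ := hp.eigenvalues with hμ
  -- Hermitian-ness of q
  have hq : ((2 : Matrix (Fin n) (Fin n) ℂ) * p - 1).IsHermitian := by
    rw [two_mul]
    exact (hp.add hp).sub Matrix.isHermitian_one
  refine ⟨hq, ?_⟩
  -- eigenvalue bound
  have heig : ∀ i, |μ i ^ 2 - μ i| < 1 / 4 := by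
    intro i
    set v := hp.eigenvectorBasis i with hv
    have hv1 : ‖v‖ = 1 := hp.eigenvectorBasis.orthonormal.1 i
    have hmv : (p * p - p) *ᵥ ⇑v = (μ i ^ 2 - μ i) • ⇑v := by
      rw [Matrix.sub_mulVec, ← Matrix.mulVec_mulVec, hp.mulVec_eigenvectorBasis,
        Matrix.mulVec_smul, hp.mulVec_eigenvectorBasis, smul_smul, ← sub_smul, sq]
    have hb := Matrix.l2_opNorm_mulVec (p * p - p) v
    rw [show ((p * p - p) *ᵥ (v : EuclideanSpace ℂ (Fin n))) = (p * p - p) *ᵥ ⇑v from rfl,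
      hmv] at hb
    have hb2 : ‖(EuclideanSpace.equiv (Fin n) ℂ).symm ((μ i ^ 2 - μ i) • ⇑v)‖
        = |μ i ^ 2 - μ i| * ‖v‖ := by
      rw [show (EuclideanSpace.equiv (Fin n) ℂ).symm ((μ i ^ 2 - μ i) • ⇑v)
        = (μ i ^ 2 - μ i) • v from rfl, norm_smul, Real.norm_eq_abs]
    rw [hb2, hv1] at hb
    simp only [mul_one] at hb
    exact lt_of_le_of_lt hb hnorm
  have heig_ne : ∀ i, μ i ≠ 1 / 2 := by
    intro i h
    have := heig i
    rw [h, abs_lt] at this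
    norm_num at this
  -- spectral decomposition of q
  set U := hp.eigenvectorUnitary with hU
  have hU1 : (U : Matrix (Fin n) (Fin n) ℂ) * star (U : Matrix (Fin n) (Fin n) ℂ) = 1 :=
    Matrix.mem_unitaryGroup_iff.mp U.2
  have hDdiag : (2 : Matrix (Fin n) (Fin n) ℂ) * Matrix.diagonal (RCLike.ofReal ∘ μ) - 1
      = Matrix.diagonal (fun i => ((2 * μ i - 1 : ℝ) : ℂ)) := by
    rw [two_mul]
    ext i j
    by_cases h : i = j
    · subst h
      simp [Matrix.diagonal_apply_eq, Matrix.one_apply_eq]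
      ring
    · simp [Matrix.diagonal_apply_ne _ h, Matrix.one_apply_ne h]
  have hdiag : (2 : Matrix (Fin n) (Fin n) ℂ) * p - 1
      = (U : Matrix (Fin n) (Fin n) ℂ) * Matrix.diagonal (fun i => ((2 * μ i - 1 : ℝ) : ℂ))
        * star (U : Matrix (Fin n) (Fin n) ℂ) := by
    conv_lhs => rw [hp.spectral_theorem, Unitary.conjStarAlgAut_apply]
    rw [← hDdiag]
    have : (U : Matrix (Fin n) (Fin n) ℂ)
        * ((2 : Matrix (Fin n) (Fin n) ℂ) * Matrix.diagonal (RCLike.ofReal ∘ μ) - 1)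
        * star (U : Matrix (Fin n) (Fin n) ℂ)
        = 2 * ((U : Matrix (Fin n) (Fin n) ℂ) * Matrix.diagonal (RCLike.ofReal ∘ μ)
          * star (U : Matrix (Fin n) (Fin n) ℂ))
          - (U : Matrix (Fin n) (Fin n) ℂ) * star (U : Matrix (Fin n) (Fin n) ℂ) := by
      noncomm_ring
    rw [this, hU1]
  -- invertibility
  have hdet : ((2 : Matrix (Fin n) (Fin n) ℂ) * p - 1).det
      = ∏ i, ((2 * μ i - 1 : ℝ) : ℂ) := by
    rw [hdiag, Matrix.det_mul, Matrix.det_mul, mul_comm ((U : Matrix (Fin n) (Fin n) ℂ)).det,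
      mul_assoc, ← Matrix.det_mul, hU1, Matrix.det_one, mul_one, Matrix.det_diagonal]
  have hunit : IsUnit ((2 : Matrix (Fin n) (Fin n) ℂ) * p - 1) := by
    rw [Matrix.isUnit_iff_isUnit_det, hdet, isUnit_iff_ne_zero]
    apply Finset.prod_ne_zero_iff.mpr
    intro i _
    simp only [ne_eq, Complex.ofReal_eq_zero]
    intro h
    exact heig_ne i (by linarith)
  refine ⟨hunit, heig_ne, ?_⟩
  -- multiset of eigenvalues of q
  have hcq1 := sqp_hermitian_charpoly_eq hq
  have hcq2 : ((2 : Matrix (Fin n) (Fin n) ℂ) * p - 1).charpoly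
      = ∏ i, (Polynomial.X - Polynomial.C ((2 * μ i - 1 : ℝ) : ℂ)) := by
    rw [hdiag, sqp_charpoly_conj_unitary, sqp_charpoly_diagonal']
  have hprod : ∏ i, (Polynomial.X - Polynomial.C ((hq.eigenvalues i : ℝ) : ℂ))
      = ∏ i, (Polynomial.X - Polynomial.C ((2 * μ i - 1 : ℝ) : ℂ)) := hcq1 ▸ hcq2
  have hmsC : Multiset.map (fun i => ((hq.eigenvalues i : ℝ) : ℂ)) Finset.univ.val
      = Multiset.map (fun i => ((2 * μ i - 1 : ℝ) : ℂ)) Finset.univ.val := by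
    have h1 := Polynomial.roots_multiset_prod_X_sub_C
      (Multiset.map (fun i => ((hq.eigenvalues i : ℝ) : ℂ)) Finset.univ.val)
    have h2 := Polynomial.roots_multiset_prod_X_sub_C
      (Multiset.map (fun i => ((2 * μ i - 1 : ℝ) : ℂ)) Finset.univ.val)
    rw [← h1, ← h2]
    congr 1
    rw [Multiset.map_map, Multiset.map_map,
      ← Finset.prod_eq_multiset_prod, ← Finset.prod_eq_multiset_prod]
    exact hprod
  have hmsR : Multiset.map hq.eigenvalues Finset.univ.val
      = Multiset.map (fun i => 2 * μ i - 1) Finset.univ.val := by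
    apply Multiset.map_injective Complex.ofReal_injective
    rw [Multiset.map_map, Multiset.map_map]
    exact hmsC
  -- counting
  have hcount : ∀ (P : ℝ → Prop) [DecidablePred P],
      (Finset.univ.filter fun i => P (hq.eigenvalues i)).card
        = (Finset.univ.filter fun i => P (2 * μ i - 1)).card := by
    intro P _
    have e1 : (Finset.univ.filter fun i => P (hq.eigenvalues i)).card
        = Multiset.countP P (Multiset.map hq.eigenvalues Finset.univ.val) := by
      rw [Multiset.countP_map]
      rfl
    have e2 : (Finset.univ.filter fun i => P (2 * μ i - 1)).card
        = Multiset.countP P (Multiset.map (fun i => 2 * μ i - 1) Finset.univ.val) := by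
      rw [Multiset.countP_map]
      rfl
    rw [e1, e2, hmsR]
  have cpos : (Finset.univ.filter fun i => 0 < hq.eigenvalues i).card
      = (Finset.univ.filter fun i => 1 / 2 < μ i).card := by
    rw [hcount (fun x => 0 < x)]
    congr 1
    apply Finset.filter_congr
    intro i _
    constructor <;> intro h <;> linarith
  have cneg : (Finset.univ.filter fun i => hq.eigenvalues i < 0).card
      = (Finset.univ.filter fun i => μ i < 1 / 2).card := by
    rw [hcount (fun x => x < 0)]
    congr 1
    apply Finset.filter_congr
    intro i _
    constructor <;> intro h <;> linarith
  have hsum : (Finset.univ.filter fun i => 1 / 2 < μ i).card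
      + (Finset.univ.filter fun i => μ i < 1 / 2).card = n := by
    have h := Finset.card_filter_add_card_filter_not
      (s := (Finset.univ : Finset (Fin n))) (p := fun i => 1 / 2 < μ i)
    rw [Finset.card_univ, Fintype.card_fin] at h
    have h2 : (Finset.filter (fun a => ¬ 1 / 2 < μ a) Finset.univ)
        = Finset.filter (fun i => μ i < 1 / 2) Finset.univ := by
      apply Finset.filter_congr
      intro i _
      constructor
      · intro h'; exact lt_of_le_of_ne (not_lt.mp h') (heig_ne i)
      · intro h'; exact not_lt.mpr h'.le
    rw [h2] at h
    exact h
  rw [cpos, cneg]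
  constructor
  · have : ((Finset.univ.filter fun i => 1 / 2 < μ i).card : ℤ)
        + ((Finset.univ.filter fun i => μ i < 1 / 2).card : ℤ) = n := by
      exact_mod_cast hsum
    linarith
  · rfl
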